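/- Explicit arc construction realizing an even triggered set (the set 𝓘 of the decoding algorithms): let m ≥ 1 and let A ⊆ {0, 1, ..., m−1} have even cardinality 2k, with increasing enumeration a_0 < a_1 < ... < a_{2k−1}. Let E ⊆ ZMod m be the union of the integer intervals {a_{2j}+1, a_{2j}+2, ..., a_{2j+1}} for j = 0, ..., k−1 (taken as residues mod m), and let e be the indicator function of E. Then supp ∂e = A; that is, every even-size subset of the ring of checks is the triggered set of the indicator of such a union of arcs. -/
import Mathlib


open scoped Classical

namespace RingCheck

/-- Cyclic boundary map of the length-`m` ring of parity checks:
`(∂e)(j) = e j + e (j+1)`. -/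
def bdy {m : ℕ} (e : ZMod m → ZMod 2) : ZMod m → ZMod 2 := fun j => e j + e (j + 1)

/-- Hamming weight of a binary vector. -/
noncomputable def wt {m : ℕ} (f : ZMod m → ZMod 2) : ℕ := {i | f i ≠ 0}.ncard

end RingCheck

private lemma arc_key (m k : ℕ) (a : ℕ → ℕ)
    (hmono : ∀ i j, i < j → j < 2 * k → a i < a j)
    (hlt : ∀ i, i < 2 * k → a i < m)
    (v w : ℕ) (hvm : v < m)
    (hw : (v + 1 < m ∧ w = v + 1) ∨ (v + 1 = m ∧ w = 0)) :
    (¬ ((∃ j, j < k ∧ a (2*j) < v ∧ v ≤ a (2*j+1)) ↔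
        (∃ j, j < k ∧ a (2*j) < w ∧ w ≤ a (2*j+1)))) ↔
    ∃ i, i < 2 * k ∧ v = a i := by
  have hle : ∀ i j, i ≤ j → j < 2 * k → a i ≤ a j := by
    intro i j h hj
    rcases h.lt_or_eq with h | h
    · exact (hmono _ _ h hj).le
    · exact h ▸ le_rfl
  rcases hw with ⟨hvm', rfl⟩ | ⟨hvm', rfl⟩
  · -- no wrap: w = v + 1
    by_cases hmem : ∃ i, i < 2 * k ∧ v = a i
    · simp only [hmem, iff_true]
      obtain ⟨i, hi, hvi⟩ := hmem
      rcases Nat.even_or_odd i with ⟨j, hj⟩ | ⟨j, hj⟩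
      · -- i = 2j even : ¬P v, P (v+1)
        have hjk : j < k := by omega
        have hvi' : v = a (2*j) := by rw [hvi]; congr 1; omega
        have hPv : ¬ (∃ j, j < k ∧ a (2*j) < v ∧ v ≤ a (2*j+1)) := by
          rintro ⟨j', hj', h1, h2⟩
          rcases lt_trichotomy j' j with h | h | h
          · have := hmono (2*j'+1) (2*j) (by omega) (by omega)
            omega
          · subst h; omega
          · have := hle (2*j) (2*j') (by omega) (by omega)
            omega
        have hPw : ∃ j, j < k ∧ a (2*j) < v + 1 ∧ v + 1 ≤ a (2*j+1) := by
          refine ⟨j, hjk, by omega, ?_⟩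
          have := hmono (2*j) (2*j+1) (by omega) (by omega)
          omega
        exact fun h => hPv (h.mpr hPw)
      · -- i = 2j+1 odd : P v, ¬P (v+1)
        have hjk : j < k := by omega
        have hvi' : v = a (2*j+1) := by rw [hvi]; congr 1
        have hPv : ∃ j, j < k ∧ a (2*j) < v ∧ v ≤ a (2*j+1) := by
          refine ⟨j, hjk, ?_, by omega⟩
          have := hmono (2*j) (2*j+1) (by omega) (by omega)
          omega
        have hPw : ¬ (∃ j, j < k ∧ a (2*j) < v + 1 ∧ v + 1 ≤ a (2*j+1)) := by
          rintro ⟨j', hj', h1, h2⟩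
          rcases lt_trichotomy j' j with h | h | h
          · have := hle (2*j'+1) (2*j+1) (by omega) (by omega)
            omega
          · subst h; omega
          · have := hle (2*j+2) (2*j') (by omega) (by omega)
            have := hmono (2*j+1) (2*j+2) (by omega) (by omega)
            omega
        exact fun h => hPw (h.mp hPv)
    · simp only [hmem, iff_false, not_not]
      constructor
      · rintro ⟨j, hj, h1, h2⟩
        have hne : v ≠ a (2*j+1) := fun h => hmem ⟨2*j+1, by omega, h⟩
        exact ⟨j, hj, by omega, by omega⟩
      · rintro ⟨j, hj, h1, h2⟩
        have hne : v ≠ a (2*j) := fun h => hmem ⟨2*j, by omega, h⟩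
        exact ⟨j, hj, by omega, by omega⟩
  · -- wrap: w = 0
    have hP0 : ¬ (∃ j, j < k ∧ a (2*j) < 0 ∧ 0 ≤ a (2*j+1)) := by
      rintro ⟨j, hj, h1, h2⟩; omega
    simp only [hP0, iff_false, not_not]
    constructor
    · rintro ⟨j, hj, h1, h2⟩
      have := hlt (2*j+1) (by omega)
      exact ⟨2*j+1, by omega, by omega⟩
    · rintro ⟨i, hi, hvi⟩
      rcases Nat.even_or_odd i with ⟨j, hj⟩ | ⟨j, hj⟩
      · exfalso
        have hvi' : v = a (2*j) := by rw [hvi]; congr 1; omega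
        have h1 := hmono (2*j) (2*j+1) (by omega) (by omega)
        have h2 := hlt (2*j+1) (by omega)
        omega
      · have hvi' : v = a (2*j+1) := by rw [hvi]; congr 1
        refine ⟨j, by omega, ?_, by omega⟩
        have := hmono (2*j) (2*j+1) (by omega) (by omega)
        omega

/-- Explicit arc construction realizing an even triggered set: if
`a 0 < a 1 < ⋯ < a (2k-1) < m` enumerates `A ⊆ {0, …, m-1}` and `e` is the
indicator of the union of arcs `{a (2j)+1, …, a (2j+1)}` (as residues mod `m`),
then the triggered set `supp ∂e` equals `A` (as residues mod `m`). -/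
theorem ring_arc_construction (m k : ℕ) (hm : 1 ≤ m) (a : ℕ → ℕ)
    (hmono : ∀ i j, i < j → j < 2 * k → a i < a j)
    (hlt : ∀ i, i < 2 * k → a i < m)
    (A : Set (ZMod m)) (hA : A = {x | ∃ i, i < 2 * k ∧ x = ((a i : ℕ) : ZMod m)})
    (e : ZMod m → ZMod 2)
    (he : e = fun x => if ∃ j, j < k ∧ ∃ n : ℕ,
        a (2 * j) + 1 ≤ n ∧ n ≤ a (2 * j + 1) ∧ x = (n : ZMod m) then 1 else 0) :
    {j | RingCheck.bdy e j ≠ 0} = A := by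
  haveI : NeZero m := ⟨by omega⟩
  subst hA he
  ext x
  simp only [Set.mem_setOf_eq, RingCheck.bdy]
  have hQ : ∀ y : ZMod m,
      (∃ j, j < k ∧ ∃ n : ℕ, a (2 * j) + 1 ≤ n ∧ n ≤ a (2 * j + 1) ∧ y = (n : ZMod m))
        ↔ (∃ j, j < k ∧ a (2*j) < y.val ∧ y.val ≤ a (2*j+1)) := by
    intro y
    constructor
    · rintro ⟨j, hj, n, h1, h2, rfl⟩
      have hn : n < m := lt_of_le_of_lt h2 (hlt _ (by omega))
      rw [ZMod.val_cast_of_lt hn]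
      exact ⟨j, hj, by omega, h2⟩
    · rintro ⟨j, hj, h1, h2⟩
      exact ⟨j, hj, y.val, by omega, h2, (ZMod.natCast_rightInverse y).symm⟩
  have hRHS : (∃ i, i < 2 * k ∧ x = ((a i : ℕ) : ZMod m)) ↔ ∃ i, i < 2 * k ∧ x.val = a i := by
    constructor
    · rintro ⟨i, hi, rfl⟩
      exact ⟨i, hi, ZMod.val_cast_of_lt (hlt i hi)⟩
    · rintro ⟨i, hi, hv⟩
      exact ⟨i, hi, by rw [← hv]; exact (ZMod.natCast_rightInverse x).symm⟩
  rw [hRHS]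
  have hvm : x.val < m := ZMod.val_lt x
  have hx1 : x + 1 = ((x.val + 1 : ℕ) : ZMod m) := by
    conv_lhs => rw [(ZMod.natCast_rightInverse x).symm]
    push_cast
    ring
  have hw : (x.val + 1 < m ∧ (x+1).val = x.val + 1) ∨ (x.val + 1 = m ∧ (x+1).val = 0) := by
    rcases Nat.lt_or_ge (x.val + 1) m with h | h
    · exact Or.inl ⟨h, by rw [hx1, ZMod.val_cast_of_lt h]⟩
    · have h' : x.val + 1 = m := by omega
      refine Or.inr ⟨h', ?_⟩
      rw [hx1, h', ZMod.natCast_self, ZMod.val_zero]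
  rw [← arc_key m k a hmono hlt x.val (x+1).val hvm hw]
  simp only [hQ]
  by_cases h1 : (∃ j, j < k ∧ a (2*j) < x.val ∧ x.val ≤ a (2*j+1)) <;>
  by_cases h2 : (∃ j, j < k ∧ a (2*j) < (x+1).val ∧ (x+1).val ≤ a (2*j+1)) <;>
    simp [h1, h2] <;> decide
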